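/- Let Γ be a set of temporal valued relations on ℚ. If the constant-zero operation does not improve Γ (equivalently, there exist R ∈ Γ of arity k and t ∈ ℚ^k with R(t) < R(0,…,0)), then the crisp binary relation ≠ belongs to ⟨Γ⟩ or the crisp binary relation < belongs to ⟨Γ⟩. If moreover every relation in Γ is Sym(ℚ)-invariant, then the crisp relation ≠ belongs to ⟨Γ⟩. -/

import Mathlib

open Classical

/-- A valued relation of arity `k` on `ℚ`. -/
abbrev VRel (k : ℕ) : Type := (Fin k → ℚ) → WithTop ℚ

/-- The crisp valued relation associated to a set of tuples: `0` on the set, `∞` off it. -/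
noncomputable def crisp {k : ℕ} (S : Set (Fin k → ℚ)) : VRel k :=
  fun t => if t ∈ S then 0 else ⊤

/-- A unary operation improves a valued relation. -/
def Improves1 (f : ℚ → ℚ) {k : ℕ} (R : VRel k) : Prop :=
  ∀ t : Fin k → ℚ, R (fun i => f (t i)) ≤ R t

/-- A binary operation improves a valued relation: `2·R(g(s,t)) ≤ R(s) + R(t)`. -/
def Improves2 (g : ℚ → ℚ → ℚ) {k : ℕ} (R : VRel k) : Prop :=
  ∀ s t : Fin k → ℚ, 2 • R (fun i => g (s i) (t i)) ≤ R s + R t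

/-- A valued relation is temporal if it is invariant under all order-preserving
bijections of `ℚ`. -/
def Temporal {k : ℕ} (R : VRel k) : Prop :=
  ∀ α : ℚ → ℚ, Function.Bijective α → StrictMono α →
    ∀ t : Fin k → ℚ, R (fun i => α (t i)) = R t

/-- A valued relation is `Sym(ℚ)`-invariant if it is invariant under all bijections of `ℚ`. -/
def SymInvariant {k : ℕ} (R : VRel k) : Prop :=
  ∀ α : ℚ → ℚ, Function.Bijective α →
    ∀ t : Fin k → ℚ, R (fun i => α (t i)) = R t

/-- The valued relational clone generated by a set `Γ` of valued relations on `ℚ`: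
the smallest set of valued relations containing `Γ`, crisp equality and the crisp empty
unary relation, closed under sums of atomic expressions, projection (infimum over extra
coordinates), shifting, nonnegative scaling, `Feas` and `Opt`. -/
inductive Clone (Γ : Set ((k : ℕ) × VRel k)) : {k : ℕ} → VRel k → Prop where
  | base {k : ℕ} {R : VRel k} : Sigma.mk k R ∈ Γ → Clone Γ R
  | eqRel : Clone Γ (crisp {t : Fin 2 → ℚ | t 0 = t 1})
  | emptyRel : Clone Γ (crisp (∅ : Set (Fin 1 → ℚ)))
  | sum {m n : ℕ} {k : Fin m → ℕ} {R : ∀ i : Fin m, VRel (k i)}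
      (σ : ∀ i : Fin m, Fin (k i) → Fin n) :
      (∀ i : Fin m, Clone Γ (R i)) →
      Clone Γ (fun x : Fin n → ℚ => ∑ i : Fin m, R i (fun j => x (σ i j)))
  | proj {k n : ℕ} {R : VRel (k + n)} {R' : VRel k} :
      Clone Γ R →
      (∀ s : Fin k → ℚ,
        IsGLB {v : WithTop ℚ | ∃ t : Fin n → ℚ, v = R (Fin.append s t)} (R' s)) →
      Clone Γ R'
  | shift {k : ℕ} {R : VRel k} (c : ℚ) :
      Clone Γ R → Clone Γ (fun t => R t + (c : WithTop ℚ))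
  | scale {k : ℕ} {R : VRel k} (q : ℚ) (hq : 0 ≤ q) :
      Clone Γ R → Clone Γ (fun t => (q : WithTop ℚ) * R t)
  | feas {k : ℕ} {R : VRel k} :
      Clone Γ R → Clone Γ (fun t => if R t ≠ ⊤ then 0 else ⊤)
  | opt {k : ℕ} {R : VRel k} :
      Clone Γ R → Clone Γ (fun t => if R t ≠ ⊤ ∧ ∀ s, R t ≤ R s then 0 else ⊤)

/-- The crisp binary order relation `<` on `ℚ`. -/
def LtS : Set (Fin 2 → ℚ) := {t | t 0 < t 1}

/-- The crisp binary disequality relation on `ℚ`. -/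
def NeS : Set (Fin 2 → ℚ) := {t | t 0 ≠ t 1}

def BetwS : Set (Fin 3 → ℚ) :=
  {t | (t 0 < t 1 ∧ t 1 < t 2) ∨ (t 2 < t 1 ∧ t 1 < t 0)}

def CycS : Set (Fin 3 → ℚ) :=
  {t | (t 0 < t 1 ∧ t 1 < t 2) ∨ (t 1 < t 2 ∧ t 2 < t 0) ∨ (t 2 < t 0 ∧ t 0 < t 1)}

/-- `c` lies strictly between `a` and `b`. -/
def StrictBetween (a b c : ℚ) : Prop := (a < c ∧ c < b) ∨ (b < c ∧ c < a)

def SepS : Set (Fin 4 → ℚ) :=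
  {t | Function.Injective t ∧
    Xor' (StrictBetween (t 0) (t 1) (t 2)) (StrictBetween (t 0) (t 1) (t 3))}

def T3S : Set (Fin 3 → ℚ) :=
  {t | (t 0 = t 1 ∧ t 1 < t 2) ∨ (t 0 = t 2 ∧ t 2 < t 1)}

def NegT3S : Set (Fin 3 → ℚ) := {t | (fun i => -(t i)) ∈ T3S}

def DisS : Set (Fin 3 → ℚ) :=
  {t | (t 0 = t 1 ∧ t 1 ≠ t 2) ∨ (t 0 ≠ t 1 ∧ t 1 = t 2)}

/-- The binary valued relation `R_{α,β,γ}` on `ℚ`. -/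
noncomputable def Rabc (a b c : WithTop ℚ) : VRel 2 :=
  fun t => if t 0 = t 1 then a else if t 0 < t 1 then b else c

/-- A lex-operation on `ℚ`. -/
def IsLex (l : ℚ → ℚ → ℚ) : Prop :=
  ∀ x x' y y' : ℚ, l x y < l x' y' ↔ (x < x' ∨ (x = x' ∧ y < y'))

/-- The dual of a binary operation on `ℚ`. -/
def dualOp (g : ℚ → ℚ → ℚ) : ℚ → ℚ → ℚ := fun x y => -g (-x) (-y)

/-- Operations of `mx` type. -/
def IsMx (g : ℚ → ℚ → ℚ) : Prop :=
  ∃ ene eeq : ℚ → ℚ, StrictMono ene ∧ StrictMono eeq ∧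
    (∀ x ε : ℚ, 0 < ε → ene x < eeq x ∧ eeq x < ene (x + ε)) ∧
    ∀ x y : ℚ, g x y = if x = y then eeq x else ene (min x y)

/-- Operations of `mi` type. -/
def IsMi (g : ℚ → ℚ → ℚ) : Prop :=
  ∃ elt eeq egt : ℚ → ℚ, StrictMono elt ∧ StrictMono eeq ∧ StrictMono egt ∧
    (∀ x ε : ℚ, 0 < ε → eeq x < egt x ∧ egt x < elt x ∧ elt x < eeq (x + ε)) ∧
    ∀ x y : ℚ, g x y = if x < y then elt x else if x = y then eeq x else egt y

/-- Operations of `lele` type. -/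
def IsLele (g : ℚ → ℚ → ℚ) : Prop :=
  ∃ eneg epos : ℚ → ℚ, StrictMono eneg ∧ StrictMono epos ∧
    (∀ x, eneg x < 0) ∧ (∀ x, 0 < epos x) ∧
    ∃ l, IsLex l ∧
      ∀ x y : ℚ, g x y = if x ≤ 0 then l (eneg x) (eneg y) else l (epos y) (epos x)

/-- A binary operation preserves a crisp relation (given as a set of tuples). -/
def Pres2 (g : ℚ → ℚ → ℚ) {k : ℕ} (S : Set (Fin k → ℚ)) : Prop :=
  ∀ s t : Fin k → ℚ, s ∈ S → t ∈ S → (fun i => g (s i) (t i)) ∈ S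

/-- The feasibility relation of a valued relation. -/
def FeasSet {k : ℕ} (R : VRel k) : Set (Fin k → ℚ) := {t | R t ≠ ⊤}

/-- The set of minimal-value feasible tuples of a valued relation. -/
def OptSet {k : ℕ} (R : VRel k) : Set (Fin k → ℚ) := {t | R t ≠ ⊤ ∧ ∀ s, R t ≤ R s}

/-- `g` preserves every relation of the crisp structure `Γ̂`, consisting of `Feas(R)`
for `R ∈ Γ` and `Opt(R_σ)` for all minors `R_σ` of relations `R ∈ Γ`. -/
def PresHat (g : ℚ → ℚ → ℚ) (Γ : Set ((k : ℕ) × VRel k)) : Prop :=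
  ∀ p ∈ Γ, Pres2 g (FeasSet p.2) ∧
    ∀ (n : ℕ) (σ : Fin p.1 → Fin n),
      Pres2 g (OptSet (fun x : Fin n → ℚ => p.2 (fun j => x (σ j))))

/-- `g` is min, max, of mx/mi/lele type, or the dual of an mx/mi/lele type operation. -/
def GoodOp (g : ℚ → ℚ → ℚ) : Prop :=
  g = (fun x y => min x y) ∨ g = (fun x y => max x y) ∨ IsMx g ∨ IsMi g ∨ IsLele g ∨
    ∃ h, (IsMx h ∨ IsMi h ∨ IsLele h) ∧ g = dualOp h

/-- `g` is the constant-zero binary operation, min, max, or of mx/mi/lele type. -/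
def BaseOp (g : ℚ → ℚ → ℚ) : Prop :=
  g = (fun _ _ => (0 : ℚ)) ∨ g = (fun x y => min x y) ∨ g = (fun x y => max x y) ∨
    IsMx g ∨ IsMi g ∨ IsLele g


private def pw (p k : ℚ) (x : ℚ) : ℚ := if x ≤ p then x else p + (x - p) * k

private lemma pw_strictMono {p k : ℚ} (hk : 0 < k) : StrictMono (pw p k) := by
  intro x y hxy
  unfold pw
  by_cases hx : x ≤ p <;> by_cases hy : y ≤ p <;> simp only [hx, hy, if_true, if_false,
    if_pos, if_neg, not_false_iff]
  · exact hxy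
  · push_neg at hy; nlinarith
  · push_neg at hx; linarith
  · push_neg at hx hy; nlinarith

private lemma pw_bijective {p k : ℚ} (hk : 0 < k) : Function.Bijective (pw p k) := by
  have hinv : ∀ x, pw p k⁻¹ (pw p k x) = x := by
    intro x
    unfold pw
    by_cases hx : x ≤ p
    · simp [hx]
    · push_neg at hx
      have h1 : ¬ (p + (x - p) * k ≤ p) := by nlinarith
      rw [if_neg (not_le.mpr hx), if_neg h1]
      field_simp
      ring
  have hinv' : ∀ x, pw p k (pw p k⁻¹ x) = x := by
    intro x
    unfold pw
    by_cases hx : x ≤ p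
    · simp [hx]
    · push_neg at hx
      have hk' : 0 < k⁻¹ := by positivity
      have h1 : ¬ (p + (x - p) * k⁻¹ ≤ p) := by nlinarith
      rw [if_neg (not_le.mpr hx), if_neg h1]
      have hkne : k ≠ 0 := ne_of_gt hk
      field_simp
      ring
  exact ⟨Function.LeftInverse.injective hinv, Function.RightInverse.surjective hinv'⟩

private lemma pw_fix {p k : ℚ} {x : ℚ} (h : x ≤ p) : pw p k x = x := if_pos h

private lemma pw_map {p k c : ℚ} (h : p < c) : pw p k c = p + (c - p) * k :=
  if_neg (not_le.mpr h)

/-- Extend a strictly monotone finite partial map to a strictly monotone bijection of ℚ. -/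
private lemma extend_mono : ∀ (r : ℕ) (a b : Fin r → ℚ), StrictMono a → StrictMono b →
    ∃ α : ℚ → ℚ, Function.Bijective α ∧ StrictMono α ∧ ∀ i, α (a i) = b i := by
  intro r
  induction r with
  | zero => exact fun a b _ _ => ⟨id, Function.bijective_id, strictMono_id, fun i => i.elim0⟩
  | succ r ih =>
    intro a b ha hb
    obtain ⟨α, hbij, hmono, hfix⟩ := ih (a ∘ Fin.castSucc) (b ∘ Fin.castSucc)
      (ha.comp Fin.strictMono_castSucc) (hb.comp Fin.strictMono_castSucc)
    cases r with
    | zero =>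
      refine ⟨fun x => x + (b 0 - a 0), (Equiv.addRight (b 0 - a 0)).bijective, ?_, ?_⟩
      · intro x y hxy; simpa using hxy
      · intro i
        have : i = 0 := Fin.fin_one_eq_zero i
        subst this; ring
    | succ r' =>
      set p : ℚ := b ((Fin.last r').castSucc) with hp
      set c : ℚ := α (a (Fin.last (r' + 1))) with hc
      set d : ℚ := b (Fin.last (r' + 1)) with hd
      have hcast : (Fin.last r').castSucc < Fin.last (r' + 1) := by
        simp [Fin.lt_def]
      have hpc : p < c := by
        have := hfix (Fin.last r')
        simp only [Function.comp_apply] at this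
        rw [hp, ← this]
        exact hmono (ha hcast)
      have hpd : p < d := hb hcast
      set kk : ℚ := (d - p) / (c - p) with hkk
      have hkk0 : 0 < kk := by
        apply div_pos <;> linarith
      refine ⟨pw p kk ∘ α, ((pw_bijective hkk0).comp hbij), (pw_strictMono hkk0).comp hmono, ?_⟩
      intro i
      refine Fin.lastCases ?_ ?_ i
      · show pw p kk c = d
        rw [pw_map hpc, hkk]
        have : c - p ≠ 0 := by linarith
        field_simp
        ring
      · intro j
        have h1 : α (a j.castSucc) = b j.castSucc := hfix j
        show pw p kk (α (a j.castSucc)) = b j.castSucc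
        rw [h1]
        exact pw_fix (hb.monotone (by simp [Fin.le_def, Fin.is_le j]))

private lemma pattern_congr {k : ℕ} {R : VRel k} (hR : Temporal R)
    {s t : Fin k → ℚ} (hpat : ∀ i j, s i ≤ s j ↔ t i ≤ t j) : R s = R t := by
  classical
  set A : Finset ℚ := Finset.univ.image s with hA
  set e := A.orderIsoOfFin (rfl : A.card = A.card) with he
  set a : Fin A.card → ℚ := fun i => (e i : ℚ) with haa
  have ha : StrictMono a := by
    intro i j hij
    exact_mod_cast e.strictMono hij
  have hmem : ∀ i : Fin A.card, ∃ j, s j = a i := by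
    intro i
    have h2 : (e i : ℚ) ∈ Finset.univ.image s := (e i).2
    rcases Finset.mem_image.mp h2 with ⟨j, _, hj⟩
    exact ⟨j, hj⟩
  choose w hw using hmem
  have keylt : ∀ {j j' : Fin k}, s j < s j' → t j < t j' := by
    intro j j' h
    by_contra h'
    exact absurd ((hpat j' j).2 (not_lt.mp h')) (not_le.mpr h)
  have hb : StrictMono (fun i => t (w i)) := by
    intro i j hij
    have : s (w i) < s (w j) := by rw [hw i, hw j]; exact ha hij
    exact keylt this
  obtain ⟨α, hbij, hmono, hfix⟩ := extend_mono A.card a (fun i => t (w i)) ha hb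
  have hαs : ∀ i, α (s i) = t i := by
    intro i
    have hsi : s i ∈ A := by rw [hA]; exact Finset.mem_image_of_mem s (Finset.mem_univ i)
    set ii := e.symm ⟨s i, hsi⟩ with hii
    have haii : a ii = s i := by
      rw [haa]; simp [hii]
    have hswi : s (w ii) = s i := by rw [hw ii, haii]
    have : t (w ii) = t i :=
      le_antisymm ((hpat _ _).1 hswi.le) ((hpat _ _).1 hswi.ge)
    rw [← haii, hfix ii, this]
  have := hR α hbij hmono s
  rw [funext hαs] at this
  exact this.symm

private lemma exists_min {k : ℕ} {R : VRel k} (hR : Temporal R) :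
    ∃ t₀ : Fin k → ℚ, ∀ s, R t₀ ≤ R s := by
  classical
  set V : Finset (WithTop ℚ) :=
    Finset.univ.image (fun f : Fin k → Fin (k+1) => R fun i => ((f i : ℕ) : ℚ)) with hV
  have hVne : V.Nonempty := ⟨_, Finset.mem_image_of_mem _ (Finset.mem_univ (fun _ => 0))⟩
  obtain ⟨f₀, _, hf₀⟩ := Finset.mem_image.mp (V.min'_mem hVne)
  refine ⟨fun i => ((f₀ i : ℕ) : ℚ), fun s => ?_⟩
  -- canonical pattern of s
  set g : Fin k → Fin (k+1) := fun i =>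
    ⟨(Finset.univ.filter (fun j => s j ≤ s i)).card, by
      have := Finset.card_filter_le Finset.univ (fun j => s j ≤ s i)
      simpa using Nat.lt_succ_of_le (by simpa using this)⟩ with hg
  have hpat : ∀ i j, s i ≤ s j ↔ ((g i : ℕ) : ℚ) ≤ ((g j : ℕ) : ℚ) := by
    intro i j
    constructor
    · intro hle
      have hsub : (Finset.univ.filter (fun l => s l ≤ s i)) ⊆
          (Finset.univ.filter (fun l => s l ≤ s j)) := by
        intro l hl
        simp only [Finset.mem_filter, Finset.mem_univ, true_and] at hl ⊢
        exact le_trans hl hle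
      exact_mod_cast Finset.card_le_card hsub
    · intro hle
      by_contra h'
      push_neg at h'
      have hsub : (Finset.univ.filter (fun l => s l ≤ s j)) ⊂
          (Finset.univ.filter (fun l => s l ≤ s i)) := by
        refine Finset.ssubset_iff_of_subset ?_ |>.mpr ?_
        · intro l hl
          simp only [Finset.mem_filter, Finset.mem_univ, true_and] at hl ⊢
          exact le_trans hl h'.le
        · exact ⟨i, by simp, by simp [not_le.mpr h']⟩
      have := Finset.card_lt_card hsub
      have : ((g j : ℕ) : ℚ) < ((g i : ℕ) : ℚ) := by exact_mod_cast this
      exact absurd hle (not_le.mpr this)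
  have hRs : R s = R (fun i => ((g i : ℕ) : ℚ)) := pattern_congr hR hpat
  rw [hf₀, hRs]
  exact V.min'_le _ (Finset.mem_image_of_mem _ (Finset.mem_univ g))

private lemma strictMono_pair {x y : ℚ} (h : x < y) : StrictMono ![x, y] := by
  intro i j hij
  rw [Fin.lt_def] at hij
  fin_cases i <;> fin_cases j <;> simp_all

/-- If the constant-zero operation does not improve a set `Γ` of temporal valued
relations, then `⟨Γ⟩` contains crisp `≠` or crisp `<`; if moreover all relations of `Γ`
are `Sym(ℚ)`-invariant, then `⟨Γ⟩` contains crisp `≠`. -/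
theorem stmt2 (Γ : Set ((k : ℕ) × VRel k)) (hT : ∀ p ∈ Γ, Temporal p.2)
    (hc : ¬ ∀ p ∈ Γ, Improves1 (fun _ => 0) p.2) :
    (Clone Γ (crisp NeS) ∨ Clone Γ (crisp LtS)) ∧
      ((∀ p ∈ Γ, SymInvariant p.2) → Clone Γ (crisp NeS)) := by
  classical
  push_neg at hc
  obtain ⟨p, hp, hni⟩ := hc
  simp only [Improves1, not_forall, not_le] at hni
  obtain ⟨t₁, hlt⟩ := hni
  obtain ⟨k, R⟩ := p
  have hR : Temporal R := hT ⟨k, R⟩ hp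
  have hlt : R t₁ < R (fun _ => 0) := hlt
  -- a global minimum of R
  obtain ⟨tm, htm⟩ := exists_min hR
  have htm_top : R tm < ⊤ := lt_of_le_of_lt (htm t₁) (lt_of_lt_of_le hlt le_top)
  have htm_opt : tm ∈ OptSet R := ⟨htm_top.ne, htm⟩
  -- choose an optimal tuple with minimal number of distinct entries
  have hPex : ∃ c, ∃ t, t ∈ OptSet R ∧ (Finset.univ.image t).card = c := ⟨_, tm, htm_opt, rfl⟩
  set m := Nat.find hPex with hm
  obtain ⟨t₀, ht₀opt, ht₀card⟩ := Nat.find_spec hPex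
  have hmin : ∀ u ∈ OptSet R, m ≤ (Finset.univ.image u).card :=
    fun u hu => Nat.find_min' hPex ⟨u, hu, rfl⟩
  have hm2 : 2 ≤ m := by
    by_contra hmlt
    push_neg at hmlt
    have hconst : ∀ i j, t₀ i = t₀ j := by
      intro i j
      have h1 : (Finset.univ.image t₀).card ≤ 1 := by omega
      exact Finset.card_le_one.mp h1 _ (Finset.mem_image_of_mem _ (Finset.mem_univ i))
        _ (Finset.mem_image_of_mem _ (Finset.mem_univ j))
    have hpat : ∀ i j, t₀ i ≤ t₀ j ↔ (fun _ => (0:ℚ)) i ≤ (fun _ => (0:ℚ)) j := by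
      intro i j; simp [hconst i j]
    have heq0 : R t₀ = R (fun _ => 0) := pattern_congr hR hpat
    have hle := ht₀opt.2 t₁
    rw [heq0] at hle
    exact absurd hle (not_le.mpr hlt)
  set n := m - 2 with hn
  have h2 : m = 2 + n := by omega
  -- the order isomorphism enumerating the values of t₀
  set A₀ := Finset.univ.image t₀ with hA₀
  set e := A₀.orderIsoOfFin ht₀card with he
  have hA₀mem : ∀ i, t₀ i ∈ A₀ := fun i => Finset.mem_image_of_mem _ (Finset.mem_univ i)
  set σ : Fin k → Fin (2 + n) := fun i => Fin.cast h2 (e.symm ⟨t₀ i, hA₀mem i⟩) with hσ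
  set a : Fin (2 + n) → ℚ := fun r => (e (Fin.cast h2.symm r) : ℚ) with haa
  have ha : StrictMono a := by
    intro i j hij
    have hc : Fin.cast h2.symm i < Fin.cast h2.symm j := by
      rw [Fin.lt_def] at hij ⊢
      exact hij
    exact_mod_cast e.strictMono hc
  have hat : ∀ i, a (σ i) = t₀ i := by
    intro i
    show (e (Fin.cast h2.symm (Fin.cast h2 (e.symm ⟨t₀ i, hA₀mem i⟩))) : ℚ) = t₀ i
    rw [show Fin.cast h2.symm (Fin.cast h2 (e.symm ⟨t₀ i, hA₀mem i⟩)) =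
      e.symm ⟨t₀ i, hA₀mem i⟩ from Fin.ext rfl, OrderIso.apply_symm_apply]
  have hσs : Function.Surjective σ := by
    intro r
    have hmem : (e (Fin.cast h2.symm r) : ℚ) ∈ Finset.univ.image t₀ := (e (Fin.cast h2.symm r)).2
    rcases Finset.mem_image.mp hmem with ⟨i, _, hi⟩
    refine ⟨i, ?_⟩
    have hsub : (⟨t₀ i, hA₀mem i⟩ : A₀) = e (Fin.cast h2.symm r) := Subtype.ext hi
    show Fin.cast h2 (e.symm ⟨t₀ i, hA₀mem i⟩) = r
    rw [hsub, OrderIso.symm_apply_apply]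
    exact Fin.ext rfl
  -- the minor Rσ is in the clone
  set Rσ : VRel (2 + n) := fun x => R (fun j => x (σ j)) with hRσ
  have hClRσ : Clone Γ Rσ := by
    have hsum := Clone.sum (Γ := Γ) (m := 1) (k := fun _ => k) (R := fun _ => R) (n := 2 + n)
      (fun _ => σ) (fun _ => Clone.base hp)
    have heq : (fun x : Fin (2 + n) → ℚ => ∑ _i : Fin 1, R fun j => x (σ j)) = Rσ := by
      funext x; simp [hRσ]
    rwa [heq] at hsum
  -- the increasing enumeration a is optimal for Rσ
  have hRa : Rσ a = R t₀ := congrArg R (funext hat)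
  have ht' : a ∈ OptSet Rσ := by
    constructor
    · rw [hRa]; exact ht₀opt.1
    · intro s; rw [hRa]; exact ht₀opt.2 _
  -- every optimal tuple of Rσ is injective
  have hinj : ∀ u ∈ OptSet Rσ, Function.Injective u := by
    intro u hu
    have huopt : (fun j => u (σ j)) ∈ OptSet R := by
      constructor
      · exact hu.1
      · intro s
        calc R (fun j => u (σ j)) = Rσ u := rfl
        _ ≤ Rσ a := hu.2 a
        _ = R t₀ := hRa
        _ ≤ R s := ht₀opt.2 s
    have h1 : m ≤ (Finset.univ.image (fun j => u (σ j))).card := hmin _ huopt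
    have himg : Finset.univ.image (fun j => u (σ j)) = Finset.univ.image u := by
      apply Finset.ext; intro x
      simp only [Finset.mem_image, Finset.mem_univ, true_and]
      constructor
      · rintro ⟨j, rfl⟩; exact ⟨σ j, rfl⟩
      · rintro ⟨r, rfl⟩; obtain ⟨j, rfl⟩ := hσs r; exact ⟨j, rfl⟩
    have h2' : (Finset.univ.image u).card ≤ 2 + n := by
      calc (Finset.univ.image u).card ≤ (Finset.univ : Finset (Fin (2 + n))).card :=
        Finset.card_image_le
      _ = 2 + n := by simp
    have hcard : (Finset.univ.image u).card = (Finset.univ : Finset (Fin (2 + n))).card := by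
      rw [himg] at h1
      simp only [Finset.card_univ, Fintype.card_fin]
      omega
    have hio := Finset.card_image_iff.mp hcard
    intro x y hxy
    exact hio (by simp) (by simp) hxy
  -- the projected binary relation
  set Bset : Set (Fin 2 → ℚ) := {s | ∃ u : Fin n → ℚ, Fin.append s u ∈ OptSet Rσ} with hB
  have hClB : Clone Γ (crisp Bset) := by
    refine Clone.proj (Clone.opt hClRσ) ?_
    intro s
    by_cases hs : s ∈ Bset
    · obtain ⟨u, hu⟩ := hs
      have hcr : crisp Bset s = 0 := if_pos ⟨u, hu⟩
      rw [hcr]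
      constructor
      · rintro v ⟨t, rfl⟩
        split
        · exact le_refl 0
        · exact le_top
      · intro w hw
        refine hw ⟨u, ?_⟩
        rw [if_pos]
        exact hu
    · have hcr : crisp Bset s = ⊤ := if_neg hs
      rw [hcr]
      constructor
      · rintro v ⟨t, rfl⟩
        rw [if_neg]
        intro hmem
        exact hs ⟨t, hmem⟩
      · intro w _; exact le_top
  -- invariance of Bset
  have hBinv : ∀ α : ℚ → ℚ, Function.Bijective α →
      (∀ x : Fin k → ℚ, R (fun i => α (x i)) = R x) →
      ∀ s ∈ Bset, (fun i => α (s i)) ∈ Bset := by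
    intro α hbij hα s hsB
    obtain ⟨u, hu⟩ := hsB
    refine ⟨fun j => α (u j), ?_⟩
    have hRσα : ∀ x : Fin (2 + n) → ℚ, Rσ (fun i => α (x i)) = Rσ x :=
      fun x => hα (fun j => x (σ j))
    have happ : Fin.append (fun i => α (s i)) (fun j => α (u j)) =
        fun i => α (Fin.append s u i) := by
      funext i
      refine Fin.addCases (fun j => ?_) (fun j => ?_) i <;>
        simp [Fin.append_left, Fin.append_right]
    rw [happ]
    exact ⟨by rw [hRσα]; exact hu.1, fun s' => by rw [hRσα]; exact hu.2 s'⟩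
  -- Bset contains an increasing pair
  have hwit : ∃ w : Fin 2 → ℚ, w ∈ Bset ∧ w 0 < w 1 := by
    refine ⟨fun i => a (Fin.castAdd n i), ⟨fun j => a (Fin.natAdd 2 j), ?_⟩, ?_⟩
    · have happ : Fin.append (fun i => a (Fin.castAdd n i)) (fun j => a (Fin.natAdd 2 j)) = a := by
        funext i
        refine Fin.addCases (fun j => ?_) (fun j => ?_) i <;>
          simp [Fin.append_left, Fin.append_right]
      rw [happ]; exact ht'
    · exact ha (by simp [Fin.lt_def])
  -- Bset is contained in the disequality relation
  have hBne : ∀ s ∈ Bset, s 0 ≠ s 1 := by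
    intro s hsB h01
    obtain ⟨u, hu⟩ := hsB
    have hinj' := hinj _ hu
    have heq2 : Fin.append s u (Fin.castAdd n (0 : Fin 2)) =
        Fin.append s u (Fin.castAdd n (1 : Fin 2)) := by
      rw [Fin.append_left, Fin.append_left, h01]
    have := hinj' heq2
    simp [Fin.ext_iff] at this
  -- fill: invariance moves any pair of the same order type into Bset
  have hfill : ∀ w, w ∈ Bset → ∀ s : Fin 2 → ℚ,
      ((w 0 < w 1 ∧ s 0 < s 1) ∨ (w 1 < w 0 ∧ s 1 < s 0)) → s ∈ Bset := by
    intro w hw s hcase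
    rcases hcase with ⟨hw01, hs01⟩ | ⟨hw10, hs10⟩
    · obtain ⟨α, hbij, hmono, hfix⟩ := extend_mono 2 ![w 0, w 1] ![s 0, s 1]
        (strictMono_pair hw01) (strictMono_pair hs01)
      have hmem := hBinv α hbij (fun x => hR α hbij hmono x) w hw
      have heqs : (fun i => α (w i)) = s := by
        funext i
        fin_cases i
        · simpa using hfix 0
        · simpa using hfix 1
      rwa [heqs] at hmem
    · obtain ⟨α, hbij, hmono, hfix⟩ := extend_mono 2 ![w 1, w 0] ![s 1, s 0]
        (strictMono_pair hw10) (strictMono_pair hs10)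
      have hmem := hBinv α hbij (fun x => hR α hbij hmono x) w hw
      have heqs : (fun i => α (w i)) = s := by
        funext i
        fin_cases i
        · simpa using hfix 1
        · simpa using hfix 0
      rwa [heqs] at hmem
  constructor
  · by_cases hgt : ∃ w ∈ Bset, w 1 < w 0
    · left
      have hBeq : Bset = NeS := by
        ext s
        constructor
        · exact fun hs => hBne s hs
        · intro hs
          rcases lt_or_gt_of_ne hs with h | h
          · obtain ⟨w, hw, hw01⟩ := hwit
            exact hfill w hw s (Or.inl ⟨hw01, h⟩)
          · obtain ⟨w, hw, hw10⟩ := hgt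
            exact hfill w hw s (Or.inr ⟨hw10, h⟩)
      rwa [hBeq] at hClB
    · right
      have hBeq : Bset = LtS := by
        ext s
        constructor
        · intro hs
          rcases lt_or_gt_of_ne (hBne s hs) with h | h
          · exact h
          · exact absurd ⟨s, hs, h⟩ hgt
        · intro hs
          obtain ⟨w, hw, hw01⟩ := hwit
          exact hfill w hw s (Or.inl ⟨hw01, hs⟩)
      rwa [hBeq] at hClB
  · intro hSymΓ
    have hSymR : SymInvariant R := hSymΓ ⟨k, R⟩ hp
    have hBeq : Bset = NeS := by
      ext s
      constructor
      · exact fun hs => hBne s hs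
      · intro hs
        obtain ⟨w, hw, hw01⟩ := hwit
        have hwne : w 0 ≠ w 1 := ne_of_lt hw01
        have hs' : s 0 ≠ s 1 := hs
        set e1 := Equiv.swap (w 0) (s 0) with he1
        set e2 := Equiv.swap (e1 (w 1)) (s 1) with he2
        set τ := e1.trans e2 with hτ
        have h10 : e1 (w 0) = s 0 := Equiv.swap_apply_left _ _
        have hτ0 : τ (w 0) = s 0 := by
          show e2 (e1 (w 0)) = s 0
          rw [h10]
          refine Equiv.swap_apply_of_ne_of_ne ?_ hs'
          intro h
          exact hwne (e1.injective (h10.trans h))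
        have hτ1 : τ (w 1) = s 1 := Equiv.swap_apply_left _ _
        have hmem := hBinv τ τ.bijective (fun x => hSymR τ τ.bijective x) w hw
        have heqs : (fun i => τ (w i)) = s := by
          funext i
          fin_cases i
          · exact hτ0
          · exact hτ1
        rwa [heqs] at hmem
    rwa [hBeq] at hClB
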